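/- Let 0 ≠ v ∈ P and set vAv := {vav : a ∈ A} = {b ∈ A : b = bv = vb}. Then vAv is closed in the norm topology of A, and for every b ∈ vAv: there exists n ∈ ℕ with b ≤ n·v; for 0 < λ ∈ ℝ, −λ·v ≤ b ≤ λ·v ⇔ −λ·1 ≤ b ≤ λ·1, so ‖b‖ = inf{λ > 0 : −λv ≤ b ≤ λv}; if 0 ≤ b then b^{1/2} ∈ vAv; b° ∈ vAv; and if v ≤ b ∈ vAv then there exists c ∈ vAv with bc = cb = v. -/

import Mathlib

/-- A synaptic algebra: a real vector subspace `carrier` of a unital associative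
real algebra `R`, containing `1`, equipped with a positive cone `Pos` making it a
partially ordered archimedean real vector space with order unit `1`, and
satisfying conditions [SA2]–[SA9]. The partial order is `a ≤ b ↔ b - a ∈ Pos`. -/
structure SynapticAlgebra (R : Type*) [Ring R] [Algebra ℝ R] where
  carrier : Set R
  one_mem : (1 : R) ∈ carrier
  add_mem : ∀ {a b : R}, a ∈ carrier → b ∈ carrier → a + b ∈ carrier
  smul_mem : ∀ (t : ℝ) {a : R}, a ∈ carrier → t • a ∈ carrier
  neg_mem : ∀ {a : R}, a ∈ carrier → -a ∈ carrier
  Pos : Set R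
  pos_subset : Pos ⊆ carrier
  pos_add : ∀ {a b : R}, a ∈ Pos → b ∈ Pos → a + b ∈ Pos
  pos_smul : ∀ {t : ℝ}, 0 ≤ t → ∀ {a : R}, a ∈ Pos → t • a ∈ Pos
  pos_antisymm : ∀ {a : R}, a ∈ Pos → -a ∈ Pos → a = 0
  arch : ∀ {a b : R}, a ∈ carrier → b ∈ carrier →
    (∀ n : ℕ, b - (n : ℝ) • a ∈ Pos) → -a ∈ Pos
  one_pos : (1 : R) ∈ Pos
  orderUnit : ∀ {a : R}, a ∈ carrier → ∃ n : ℕ, (n : ℝ) • (1 : R) - a ∈ Pos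
  SA2 : ∀ {a b : R}, a ∈ Pos → b ∈ Pos → a * b = b * a → a * b ∈ Pos
  SA3 : ∀ {a : R}, a ∈ carrier → a * a ∈ Pos
  SA4 : ∀ {a b : R}, a ∈ Pos → b ∈ Pos → a * b * a ∈ Pos
  SA5 : ∀ {a b : R}, a ∈ carrier → b ∈ Pos → a * b * a = 0 → a * b = 0 ∧ b * a = 0
  SA6 : ∀ {a : R}, a ∈ Pos →
    ∃ b : R, b ∈ Pos ∧ (∀ c ∈ carrier, c * a = a * c → c * b = b * c) ∧ b * b = a
  SA7 : ∀ {a : R}, a ∈ carrier →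
    ∃ p : R, p ∈ carrier ∧ p * p = p ∧ ∀ b ∈ carrier, (a * b = 0 ↔ p * b = 0)
  SA8 : ∀ {a : R}, a ∈ carrier → a - 1 ∈ Pos → ∃ b ∈ carrier, a * b = 1 ∧ b * a = 1
  SA9 : ∀ {a b : R}, a ∈ carrier → b ∈ carrier → ∀ s : ℕ → R,
    (∀ n, s n ∈ carrier) → (∀ n, s (n + 1) - s n ∈ Pos) →
    (∀ m n, s m * s n = s n * s m) → (∀ n, s n * b = b * s n) →
    (∀ ε : ℝ, 0 < ε →
      ∃ N : ℕ, ∀ n ≥ N, (a - s n) - (-ε) • (1 : R) ∈ Pos ∧ ε • (1 : R) - (a - s n) ∈ Pos) →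
    a * b = b * a

namespace SynapticAlgebra

variable {R : Type*} [Ring R] [Algebra ℝ R]

/-- The partial order of the synaptic algebra: `a ≤ b` iff `b - a` is in the positive cone. -/
def le (S : SynapticAlgebra R) (a b : R) : Prop := b - a ∈ S.Pos

/-- The identification of a real number `t` with the element `t·1` of the algebra. -/
def scal (_ : SynapticAlgebra R) (t : ℝ) : R := t • (1 : R)

/-- The order-unit norm: `‖a‖ = inf {t : ℝ | 0 < t ∧ -t·1 ≤ a ≤ t·1}`. -/
noncomputable def nrm (S : SynapticAlgebra R) (a : R) : ℝ :=
  sInf {t : ℝ | 0 < t ∧ S.le (S.scal (-t)) a ∧ S.le a (S.scal t)}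

/-- `p` is a projection: an idempotent element of the algebra. -/
def IsProj (S : SynapticAlgebra R) (p : R) : Prop := p ∈ S.carrier ∧ p * p = p

/-- `e` is an effect: an element with `0 ≤ e ≤ 1`. -/
def IsEff (S : SynapticAlgebra R) (e : R) : Prop := e ∈ S.carrier ∧ S.le 0 e ∧ S.le e 1

/-- `b ∈ CC(a)`: `b` is in the algebra and commutes with every element of the
algebra that commutes with `a` (the double commutant of `a`). -/
def inCC (S : SynapticAlgebra R) (a b : R) : Prop :=
  b ∈ S.carrier ∧ ∀ c ∈ S.carrier, c * a = a * c → c * b = b * c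

/-- The square root of a positive element (chosen via [SA6]; it is unique). -/
noncomputable def sqrt (S : SynapticAlgebra R) (a : R) : R :=
  @dite R (a ∈ S.Pos) (Classical.dec _) (fun h => Classical.choose (S.SA6 h)) (fun _ => 0)

/-- The carrier projection `a°` of `a` (chosen via [SA7]; it is unique):
the projection `p` such that for all `b` in the algebra, `ab = 0 ↔ pb = 0`. -/
noncomputable def carr (S : SynapticAlgebra R) (a : R) : R :=
  @dite R (a ∈ S.carrier) (Classical.dec _) (fun h => Classical.choose (S.SA7 h)) (fun _ => 0)

/-- Absolute value: `|a| := (a²)^{1/2}`. -/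
noncomputable def abs (S : SynapticAlgebra R) (a : R) : R := S.sqrt (a * a)

/-- Positive part: `a⁺ := ½(|a| + a)`. -/
noncomputable def posPart (S : SynapticAlgebra R) (a : R) : R := (1/2 : ℝ) • (S.abs a + a)

/-- Negative part: `a⁻ := ½(|a| − a)`. -/
noncomputable def negPart (S : SynapticAlgebra R) (a : R) : R := (1/2 : ℝ) • (S.abs a - a)

/-- Signum: `sgn(a) := (a⁺)° − (a⁻)°`. -/
noncomputable def sgn (S : SynapticAlgebra R) (a : R) : R :=
  S.carr (S.posPart a) - S.carr (S.negPart a)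

/-- The Sasaki mapping: `φ_a(b) := (aba)°`. -/
noncomputable def sas (S : SynapticAlgebra R) (a b : R) : R := S.carr (a * b * a)

/-- `m` is the infimum of the projections `p` and `q` in the poset `P` of projections. -/
def IsMeet (S : SynapticAlgebra R) (p q m : R) : Prop :=
  S.IsProj m ∧ S.le m p ∧ S.le m q ∧ ∀ r, S.IsProj r → S.le r p → S.le r q → S.le r m

/-- `j` is the supremum of the projections `p` and `q` in the poset `P` of projections. -/
def IsJoin (S : SynapticAlgebra R) (p q j : R) : Prop :=
  S.IsProj j ∧ S.le p j ∧ S.le q j ∧ ∀ r, S.IsProj r → S.le p r → S.le q r → S.le j r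

end SynapticAlgebra

open SynapticAlgebra Filter

variable {R : Type*} [Ring R] [Algebra ℝ R]

section Helpers

variable {R : Type*} [Ring R] [Algebra ℝ R] (S : SynapticAlgebra R)

lemma pos_zero' : (0 : R) ∈ S.Pos := by
  have h := S.pos_smul (le_refl (0 : ℝ)) S.one_pos
  simpa using h

lemma sub_mem' {a b : R} (ha : a ∈ S.carrier) (hb : b ∈ S.carrier) :
    a - b ∈ S.carrier := by
  rw [sub_eq_add_neg]; exact S.add_mem ha (S.neg_mem hb)

lemma sle_trans {a b c : R} (h1 : S.le a b) (h2 : S.le b c) : S.le a c := by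
  show c - a ∈ S.Pos
  have h := S.pos_add (h2 : c - b ∈ S.Pos) (h1 : b - a ∈ S.Pos)
  rwa [show c - b + (b - a) = c - a by abel] at h

lemma sle_sub {a b c d : R} (h1 : S.le a b) (h2 : S.le c d) :
    S.le (a - d) (b - c) := by
  show b - c - (a - d) ∈ S.Pos
  have h := S.pos_add (h1 : b - a ∈ S.Pos) (h2 : d - c ∈ S.Pos)
  rwa [show b - a + (d - c) = b - c - (a - d) by abel] at h

lemma smul_one_le {s t : ℝ} (h : s ≤ t) : S.le (s • (1 : R)) (t • (1 : R)) := by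
  show t • (1 : R) - s • 1 ∈ S.Pos
  rw [← sub_smul]
  exact S.pos_smul (by linarith) S.one_pos

lemma decomp' {a : R} (ha : a ∈ S.carrier) :
    ∃ p ∈ S.Pos, ∃ q ∈ S.Pos, a = p - q := by
  obtain ⟨n, hn⟩ := S.orderUnit (S.neg_mem ha)
  exact ⟨(n : ℝ) • (1 : R) - -a, hn, (n : ℝ) • (1 : R),
    S.pos_smul (by positivity) S.one_pos, by abel⟩

lemma conj_pos_mem {p b : R} (hp : p ∈ S.Pos) (hb : b ∈ S.carrier) :
    p * b * p ∈ S.carrier := by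
  obtain ⟨b1, h1, b2, h2, rfl⟩ := decomp' S hb
  rw [show p * (b1 - b2) * p = p * b1 * p - p * b2 * p by noncomm_ring]
  exact sub_mem' S (S.pos_subset (S.SA4 hp h1)) (S.pos_subset (S.SA4 hp h2))

lemma conj_mem {a b : R} (ha : a ∈ S.carrier) (hb : b ∈ S.carrier) :
    a * b * a ∈ S.carrier := by
  obtain ⟨p, hp, q, hq, rfl⟩ := decomp' S ha
  rw [show (p - q) * b * (p - q) =
      (p * b * p + q * b * q + (p * b * p + q * b * q)) - (p + q) * b * (p + q) by
    noncomm_ring]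
  exact sub_mem' S
    (S.add_mem (S.add_mem (conj_pos_mem S hp hb) (conj_pos_mem S hq hb))
      (S.add_mem (conj_pos_mem S hp hb) (conj_pos_mem S hq hb)))
    (conj_pos_mem S (S.pos_add hp hq) hb)

lemma conj_le {v a b : R} (hv : v ∈ S.Pos) (h : S.le a b) :
    S.le (v * a * v) (v * b * v) := by
  show v * b * v - v * a * v ∈ S.Pos
  rw [show v * b * v - v * a * v = v * (b - a) * v by noncomm_ring]
  exact S.SA4 hv (h : b - a ∈ S.Pos)

lemma nrm_set_nonempty {a : R} (ha : a ∈ S.carrier) :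
    {t : ℝ | 0 < t ∧ S.le (S.scal (-t)) a ∧ S.le a (S.scal t)}.Nonempty := by
  obtain ⟨n, hn⟩ := S.orderUnit ha
  obtain ⟨m, hm⟩ := S.orderUnit (S.neg_mem ha)
  refine ⟨(n : ℝ) + (m : ℝ) + 1, ?_⟩
  simp only [Set.mem_setOf_eq]
  refine ⟨by positivity, ?_, ?_⟩
  · show a - S.scal (-((n : ℝ) + (m : ℝ) + 1)) ∈ S.Pos
    have h1 : ((n : ℝ) + 1) • (1 : R) ∈ S.Pos := S.pos_smul (by positivity) S.one_pos
    have h2 := S.pos_add hm h1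
    simp only [SynapticAlgebra.scal]
    rwa [show (m : ℝ) • (1 : R) - -a + ((n : ℝ) + 1) • (1 : R)
        = a - (-((n : ℝ) + (m : ℝ) + 1)) • (1 : R) by module] at h2
  · show S.scal ((n : ℝ) + (m : ℝ) + 1) - a ∈ S.Pos
    have h1 : ((m : ℝ) + 1) • (1 : R) ∈ S.Pos := S.pos_smul (by positivity) S.one_pos
    have h2 := S.pos_add hn h1
    simp only [SynapticAlgebra.scal]
    rwa [show (n : ℝ) • (1 : R) - a + ((m : ℝ) + 1) • (1 : R)
        = ((n : ℝ) + (m : ℝ) + 1) • (1 : R) - a by module] at h2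

lemma nrm_lt_bound {a : R} (ha : a ∈ S.carrier) {ε : ℝ} (h : S.nrm a < ε) :
    S.le (S.scal (-ε)) a ∧ S.le a (S.scal ε) := by
  have hbdd : BddBelow {t : ℝ | 0 < t ∧ S.le (S.scal (-t)) a ∧ S.le a (S.scal t)} :=
    ⟨0, fun t ht => le_of_lt ht.1⟩
  have h' : sInf {t : ℝ | 0 < t ∧ S.le (S.scal (-t)) a ∧ S.le a (S.scal t)} < ε := h
  obtain ⟨t, ht, hlt⟩ := (csInf_lt_iff hbdd (nrm_set_nonempty S ha)).mp h'
  obtain ⟨htpos, h1, h2⟩ := ht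
  constructor
  · exact sle_trans S (smul_one_le S (by linarith : -ε ≤ -t)) h1
  · exact sle_trans S h2 (smul_one_le S hlt.le)

lemma arch_pos {e : R} (he : e ∈ S.carrier)
    (hb : ∀ ε : ℝ, 0 < ε → S.le (S.scal (-ε)) e) : e ∈ S.Pos := by
  have h := S.arch (S.neg_mem he) S.one_mem ?_
  · rwa [neg_neg] at h
  · intro n
    have hne : ((n : ℝ) + 1) ≠ 0 := by positivity
    have h1 : e - S.scal (-(1 / ((n : ℝ) + 1))) ∈ S.Pos := hb _ (by positivity)
    have h2 := S.pos_smul (Nat.cast_nonneg n) h1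
    have h3 : (1 - (n : ℝ) / ((n : ℝ) + 1)) • (1 : R) ∈ S.Pos := by
      apply S.pos_smul _ S.one_pos
      rw [sub_nonneg]
      exact div_le_one_of_le₀ (by linarith) (by positivity)
    have h4 := S.pos_add h2 h3
    rwa [show (n : ℝ) • (e - S.scal (-(1 / ((n : ℝ) + 1))))
        + (1 - (n : ℝ) / ((n : ℝ) + 1)) • (1 : R) = (1 : R) - (n : ℝ) • (-e) by
      simp only [SynapticAlgebra.scal]
      match_scalars <;> field_simp <;> ring] at h4

lemma arch_zero {d : R} (hd : d ∈ S.carrier)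
    (h : ∀ ε : ℝ, 0 < ε → S.le (S.scal (-ε)) d ∧ S.le d (S.scal ε)) : d = 0 := by
  have h1 : d ∈ S.Pos := arch_pos S hd (fun ε hε => (h ε hε).1)
  have h2 : -d ∈ S.Pos := by
    apply arch_pos S (S.neg_mem hd)
    intro ε hε
    have h3 : S.scal ε - d ∈ S.Pos := (h ε hε).2
    show -d - S.scal (-ε) ∈ S.Pos
    rwa [show S.scal ε - d = -d - S.scal (-ε) by
      simp only [SynapticAlgebra.scal]; module] at h3
  exact S.pos_antisymm h1 h2

lemma proj_pos {v : R} (hv : S.IsProj v) : v ∈ S.Pos := by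
  have h := S.SA3 hv.1; rwa [hv.2] at h

lemma proj_le_one {v : R} (hv : S.IsProj v) : (1 : R) - v ∈ S.Pos := by
  have hc : (1 : R) - v ∈ S.carrier := sub_mem' S S.one_mem hv.1
  have h := S.SA3 hc
  rwa [show ((1 : R) - v) * ((1 : R) - v) = 1 - v - (v - v * v) by noncomm_ring,
    hv.2, sub_self, sub_zero] at h

end Helpers

/-- Theorem 4.11: for a nonzero projection `v`, the set `vAv = {vav : a ∈ A}
= {b ∈ A : b = bv = vb}` is norm closed, `v` is an order unit for it, the
order-unit norm of `vAv` is the restriction of that of `A`, `vAv` is closed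
under square roots and carriers, and elements `b` of `vAv` with `v ≤ b` are
invertible in `vAv`. -/
theorem stmt15 (S : SynapticAlgebra R) {v : R} (hv : S.IsProj v) (hv0 : v ≠ 0) :
    (∀ x : R, (∃ a ∈ S.carrier, x = v * a * v) ↔
      (x ∈ S.carrier ∧ x * v = x ∧ v * x = x)) ∧
    (∀ (s : ℕ → R), (∀ n, s n ∈ S.carrier ∧ s n * v = s n ∧ v * s n = s n) →
      ∀ b ∈ S.carrier, Tendsto (fun n => S.nrm (b - s n)) atTop (nhds 0) →
        (b ∈ S.carrier ∧ b * v = b ∧ v * b = b)) ∧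
    (∀ b : R, (b ∈ S.carrier ∧ b * v = b ∧ v * b = b) →
      (∃ n : ℕ, S.le b ((n : ℝ) • v)) ∧
      (∀ t : ℝ, 0 < t →
        ((S.le (-(t • v)) b ∧ S.le b (t • v)) ↔
          (S.le (S.scal (-t)) b ∧ S.le b (S.scal t)))) ∧
      (S.nrm b = sInf {t : ℝ | 0 < t ∧ S.le (-(t • v)) b ∧ S.le b (t • v)}) ∧
      (b ∈ S.Pos → (S.sqrt b * v = S.sqrt b ∧ v * S.sqrt b = S.sqrt b)) ∧
      (S.carr b * v = S.carr b ∧ v * S.carr b = S.carr b) ∧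
      (S.le v b → ∃ c : R, (c ∈ S.carrier ∧ c * v = c ∧ v * c = c) ∧
        b * c = v ∧ c * b = v)) := by
  obtain ⟨hvC, hvv⟩ := hv
  have hvpos : v ∈ S.Pos := proj_pos S ⟨hvC, hvv⟩
  have hv1 : (1 : R) - v ∈ S.Pos := proj_le_one S ⟨hvC, hvv⟩
  refine ⟨?_, ?_, ?_⟩
  · -- part 1
    intro x
    constructor
    · rintro ⟨a, ha, rfl⟩
      refine ⟨conj_mem S hvC ha, ?_, ?_⟩
      · rw [mul_assoc, hvv]
      · rw [← mul_assoc, ← mul_assoc, hvv]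
    · rintro ⟨hx, hxv, hvx⟩
      exact ⟨x, hx, by rw [hvx, hxv]⟩
  · -- part 2 : norm closedness
    intro s hs b hb htend
    have hvsv : ∀ n, v * s n * v = s n := fun n => by rw [(hs n).2.2, (hs n).2.1]
    have hkey : ∀ ε : ℝ, 0 < ε →
        S.le (S.scal (-ε)) (b - v * b * v) ∧ S.le (b - v * b * v) (S.scal ε) := by
      intro ε hε
      obtain ⟨N, hN⟩ := Metric.tendsto_atTop.mp htend (ε / 2) (by positivity)
      have hd : S.nrm (b - s N) < ε / 2 := by
        have h := hN N le_rfl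
        rw [Real.dist_eq, sub_zero] at h
        exact lt_of_le_of_lt (le_abs_self _) h
      have hcm : b - s N ∈ S.carrier := sub_mem' S hb (hs N).1
      obtain ⟨hlo, hhi⟩ := nrm_lt_bound S hcm hd
      have hconj1 := conj_le S hvpos hlo
      have hconj2 := conj_le S hvpos hhi
      have ev1 : v * S.scal (-(ε / 2)) * v = (-(ε / 2)) • v := by
        simp only [SynapticAlgebra.scal]
        rw [mul_smul_comm, smul_mul_assoc, mul_one, hvv]
      have ev2 : v * S.scal (ε / 2) * v = (ε / 2) • v := by
        simp only [SynapticAlgebra.scal]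
        rw [mul_smul_comm, smul_mul_assoc, mul_one, hvv]
      rw [ev1] at hconj1
      rw [ev2] at hconj2
      have hb1 : S.le (S.scal (-(ε / 2))) ((-(ε / 2)) • v) := by
        show (-(ε / 2)) • v - S.scal (-(ε / 2)) ∈ S.Pos
        simp only [SynapticAlgebra.scal]
        rw [show (-(ε / 2)) • v - (-(ε / 2)) • (1 : R) = (ε / 2) • ((1 : R) - v) by module]
        exact S.pos_smul (by positivity) hv1
      have hb2 : S.le ((ε / 2) • v) (S.scal (ε / 2)) := by
        show S.scal (ε / 2) - (ε / 2) • v ∈ S.Pos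
        simp only [SynapticAlgebra.scal]
        rw [show (ε / 2) • (1 : R) - (ε / 2) • v = (ε / 2) • ((1 : R) - v) by module]
        exact S.pos_smul (by positivity) hv1
      have hlo' : S.le (S.scal (-(ε / 2))) (v * (b - s N) * v) := sle_trans S hb1 hconj1
      have hhi' : S.le (v * (b - s N) * v) (S.scal (ε / 2)) := sle_trans S hconj2 hb2
      have hre : b - v * b * v = (b - s N) - v * (b - s N) * v := by
        rw [show v * (b - s N) * v = v * b * v - v * s N * v by noncomm_ring, hvsv N]
        abel
      constructor
      · rw [hre]
        have h := sle_sub S hlo hhi'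
        rwa [show S.scal (-(ε / 2)) - S.scal (ε / 2) = S.scal (-ε) by
          simp only [SynapticAlgebra.scal]; module] at h
      · rw [hre]
        have h := sle_sub S hhi hlo'
        rwa [show S.scal (ε / 2) - S.scal (-(ε / 2)) = S.scal ε by
          simp only [SynapticAlgebra.scal]; module] at h
    have h0 : b - v * b * v = 0 :=
      arch_zero S (sub_mem' S hb (conj_mem S hvC hb)) hkey
    have hbeq : b = v * b * v := (sub_eq_zero.mp h0)
    refine ⟨hb, ?_, ?_⟩
    · rw [hbeq, mul_assoc, hvv]
    · rw [hbeq, ← mul_assoc, ← mul_assoc, hvv]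
  · -- part 3
    rintro b ⟨hb, hbv, hvb⟩
    have hvbv : v * b * v = b := by rw [hvb, hbv]
    have hiff : ∀ t : ℝ, 0 < t →
        ((S.le (-(t • v)) b ∧ S.le b (t • v)) ↔
          (S.le (S.scal (-t)) b ∧ S.le b (S.scal t))) := by
      intro t ht
      constructor
      · rintro ⟨h1, h2⟩
        constructor
        · refine sle_trans S ?_ h1
          show -(t • v) - S.scal (-t) ∈ S.Pos
          simp only [SynapticAlgebra.scal]
          rw [show -(t • v) - (-t) • (1 : R) = t • ((1 : R) - v) by module]
          exact S.pos_smul ht.le hv1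
        · refine sle_trans S h2 ?_
          show S.scal t - t • v ∈ S.Pos
          simp only [SynapticAlgebra.scal]
          rw [show t • (1 : R) - t • v = t • ((1 : R) - v) by module]
          exact S.pos_smul ht.le hv1
      · rintro ⟨h1, h2⟩
        have c1 := conj_le S hvpos h1
        have c2 := conj_le S hvpos h2
        rw [hvbv] at c1 c2
        have e1 : v * S.scal (-t) * v = -(t • v) := by
          simp only [SynapticAlgebra.scal]
          rw [mul_smul_comm, smul_mul_assoc, mul_one, hvv, neg_smul]
        have e2 : v * S.scal t * v = t • v := by
          simp only [SynapticAlgebra.scal]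
          rw [mul_smul_comm, smul_mul_assoc, mul_one, hvv]
        rw [e1] at c1
        rw [e2] at c2
        exact ⟨c1, c2⟩
    refine ⟨?_, hiff, ?_, ?_, ?_, ?_⟩
    · -- (i) order unit
      obtain ⟨n, hn⟩ := S.orderUnit hb
      refine ⟨n, ?_⟩
      have h := conj_le S hvpos (show S.le b ((n : ℝ) • (1 : R)) from hn)
      rwa [hvbv, mul_smul_comm, smul_mul_assoc, mul_one, hvv] at h
    · -- (iii) norm formula
      have hsets : {t : ℝ | 0 < t ∧ S.le (-(t • v)) b ∧ S.le b (t • v)}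
          = {t : ℝ | 0 < t ∧ S.le (S.scal (-t)) b ∧ S.le b (S.scal t)} := by
        ext t
        simp only [Set.mem_setOf_eq]
        constructor
        · rintro ⟨ht, h⟩; exact ⟨ht, (hiff t ht).mp h⟩
        · rintro ⟨ht, h⟩; exact ⟨ht, (hiff t ht).mpr h⟩
      rw [hsets]
      rfl
    · -- (iv) square root
      intro hbp
      have hsq : S.sqrt b = Classical.choose (S.SA6 hbp) := by
        simp only [SynapticAlgebra.sqrt]
        rw [dif_pos hbp]
      obtain ⟨hrpos, hrcomm, hrr⟩ := Classical.choose_spec (S.SA6 hbp)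
      rw [hsq]
      set r := Classical.choose (S.SA6 hbp) with hr
      have hcomm : v * r = r * v := hrcomm v hvC (by rw [hvb, hbv])
      have hrC : r ∈ S.carrier := S.pos_subset hrpos
      have hvrC : v * r ∈ S.carrier := by
        have h1 : v * r * v ∈ S.carrier := conj_mem S hvC hrC
        rwa [mul_assoc, ← hcomm, ← mul_assoc, hvv] at h1
      have e1 : (v * r) * r = b := by rw [mul_assoc, hrr, hvb]
      have e2 : r * (v * r) = b := by rw [← mul_assoc, ← hcomm, mul_assoc, hrr, hvb]
      have e3 : (v * r) * (v * r) = b := by rw [mul_assoc, e2, hvb]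
      have hx : (r - v * r) * (r - v * r) = 0 := by
        rw [sub_mul, mul_sub, mul_sub, hrr, e2, e1, e3]
        simp
      have hxC : r - v * r ∈ S.carrier := sub_mem' S hrC hvrC
      have h5 := S.SA5 hxC S.one_pos (by rw [mul_one, hx])
      have hx0 : r - v * r = 0 := by
        have h6 := h5.1; rwa [mul_one] at h6
      have hvr : v * r = r := (sub_eq_zero.mp hx0).symm
      exact ⟨by rw [← hcomm, hvr], hvr⟩
    · -- (v) carrier projection
      have hcb : S.carr b = Classical.choose (S.SA7 hb) := by
        simp only [SynapticAlgebra.carr]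
        rw [dif_pos hb]
      obtain ⟨hpC, hpp, hpspec⟩ := Classical.choose_spec (S.SA7 hb)
      rw [hcb]
      set p := Classical.choose (S.SA7 hb) with hp
      have hwC : (1 : R) - v ∈ S.carrier := sub_mem' S S.one_mem hvC
      have hb0 : b * ((1 : R) - v) = 0 := by rw [mul_sub, mul_one, hbv, sub_self]
      have hp0 : p * ((1 : R) - v) = 0 := (hpspec _ hwC).mp hb0
      have hpv : p * v = p := by
        rw [mul_sub, mul_one] at hp0
        exact (sub_eq_zero.mp hp0).symm
      have hpwp : p * ((1 : R) - v) * p = 0 := by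
        rw [mul_sub, mul_one, hpv, sub_self, zero_mul]
      have h5 := S.SA5 hpC hv1 hpwp
      have hwp : ((1 : R) - v) * p = 0 := h5.2
      have hvp : v * p = p := by
        rw [sub_mul, one_mul] at hwp
        exact (sub_eq_zero.mp hwp).symm
      exact ⟨hpv, hvp⟩
    · -- (vi) invertibility
      intro hvleb
      have hwC : (1 : R) - v ∈ S.carrier := sub_mem' S S.one_mem hvC
      have hb'C : b + ((1 : R) - v) ∈ S.carrier := S.add_mem hb hwC
      have hb'ge : (b + ((1 : R) - v)) - 1 ∈ S.Pos := by
        rw [show b + ((1 : R) - v) - 1 = b - v by abel]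
        exact hvleb
      obtain ⟨d, hdC, hbd, hdb⟩ := S.SA8 hb'C hb'ge
      have hvb' : v * (b + ((1 : R) - v)) = b := by
        rw [mul_add, hvb, mul_sub, mul_one, hvv, sub_self, add_zero]
      have hb'v : (b + ((1 : R) - v)) * v = b := by
        rw [add_mul, hbv, sub_mul, one_mul, hvv, sub_self, add_zero]
      have hdv : v * d = d * v := by
        calc v * d = 1 * (v * d) := by rw [one_mul]
          _ = (d * (b + ((1 : R) - v))) * (v * d) := by rw [hdb]
          _ = d * (((b + ((1 : R) - v)) * v) * d) := by
              rw [mul_assoc, ← mul_assoc (b + ((1 : R) - v)) v d]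
          _ = d * (b * d) := by rw [hb'v]
          _ = d * ((v * (b + ((1 : R) - v))) * d) := by rw [hvb']
          _ = (d * v) * ((b + ((1 : R) - v)) * d) := by
              rw [mul_assoc v (b + ((1 : R) - v)) d, ← mul_assoc]
          _ = (d * v) * 1 := by rw [hbd]
          _ = d * v := by rw [mul_one]
      have hwb : ((1 : R) - v) * b = 0 := by rw [sub_mul, one_mul, hvb, sub_self]
      have hww : ((1 : R) - v) * ((1 : R) - v) = (1 : R) - v := by
        rw [sub_mul, one_mul, mul_sub, mul_one, hvv]
        abel
      have hwb' : ((1 : R) - v) * (b + ((1 : R) - v)) = (1 : R) - v := by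
        rw [mul_add, hwb, hww, zero_add]
      have hwd : ((1 : R) - v) * d = (1 : R) - v := by
        calc ((1 : R) - v) * d = (((1 : R) - v) * (b + ((1 : R) - v))) * d := by rw [hwb']
          _ = ((1 : R) - v) * ((b + ((1 : R) - v)) * d) := by rw [mul_assoc]
          _ = (1 : R) - v := by rw [hbd, mul_one]
      have hdw : d * ((1 : R) - v) = (1 : R) - v := by
        have h7 : d * ((1 : R) - v) = ((1 : R) - v) * d := by
          rw [mul_sub, sub_mul, mul_one, one_mul, hdv]
        rw [h7, hwd]
      refine ⟨v * d, ⟨?_, ?_, ?_⟩, ?_, ?_⟩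
      · have h1 : v * d * v ∈ S.carrier := conj_mem S hvC hdC
        rwa [mul_assoc, ← hdv, ← mul_assoc, hvv] at h1
      · rw [mul_assoc, ← hdv, ← mul_assoc, hvv]
      · rw [← mul_assoc, hvv]
      · rw [← mul_assoc, hbv]
        have h1 : b * d + ((1 : R) - v) * d = 1 := by rw [← add_mul, hbd]
        rw [hwd] at h1
        have h2 : b * d = 1 - ((1 : R) - v) := eq_sub_of_add_eq h1
        rw [h2, sub_sub_cancel]
      · rw [mul_assoc]
        have h1 : d * b + d * ((1 : R) - v) = 1 := by rw [← mul_add, hdb]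
        rw [hdw] at h1
        have h2 : d * b = 1 - ((1 : R) - v) := eq_sub_of_add_eq h1
        rw [h2, sub_sub_cancel, hvv]
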